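/- arXiv:2410.08395 — 5 statements merged into one kernel-verified Lean document; each statement's English description precedes it below -/
import Mathlib

section
/- Let f₁: ℝ^{d−k} → [0, ∞) be μ-strongly convex with f₁(0) = 0 (so 0 is its unique minimizer), and let f₂: ℝᵏ → [a, ∞) be continuous with a > 0. Define f(x₁,…,x_d) = f₂(x₁,…,x_k)·f₁(x_{k+1},…,x_d). Then the set of minimizers of f is {x : x_{k+1} = … = x_d = 0}, the closest minimizer to x is π(x) = (x₁,…,x_k, 0,…,0), and f is first-order (a·μ)-strongly convex with respect to the closest minimizer: ⟨∇f(x), x − π(x)⟩ ≥ f(x) − f(π(x)) + (aμ/2)‖x − π(x)‖². -/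
open RealInnerProductSpace

section aux
variable {H : Type*} [NormedAddCommGroup H]

lemma convex_fd_le [NormedSpace ℝ H] {g : H → ℝ} (hg : ConvexOn ℝ Set.univ g)
    {x v : H} {L : H →L[ℝ] ℝ} (hd : HasFDerivAt g L x) : L v ≤ g (x + v) - g x := by
  have h1 : HasDerivAt (fun t : ℝ => x + t • v) v 0 := by
    simpa using ((hasDerivAt_id (0 : ℝ)).smul_const v).const_add x
  have hd' : HasFDerivAt g L (x + (0 : ℝ) • v) := by
    rw [zero_smul, add_zero]; exact hd
  have hφ : HasDerivAt (fun t : ℝ => g (x + t • v)) (L v) 0 := by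
    have := hd'.comp_hasDerivAt 0 h1; exact this
  have hc : ConvexOn ℝ Set.univ (fun t : ℝ => g (x + t • v)) := by
    have := hg.comp_affineMap (AffineMap.lineMap x (x + v) : ℝ →ᵃ[ℝ] H)
    simpa [Function.comp_def, AffineMap.lineMap_apply, add_comm] using this
  have := hc.le_slope_of_hasDerivAt (Set.mem_univ (0 : ℝ)) (Set.mem_univ 1) one_pos hφ
  simpa [slope_def_field] using this

lemma sc_key [InnerProductSpace ℝ H] {μ : ℝ} {g : H → ℝ}
    (hsc : StrongConvexOn Set.univ μ g) {y : H} {L : H →L[ℝ] ℝ}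
    (hd : HasFDerivAt g L y) : g y - g 0 + μ / 2 * ‖y‖ ^ 2 ≤ L y := by
  have hconv : ConvexOn ℝ Set.univ fun z : H => g z - μ / 2 * ‖z‖ ^ 2 :=
    strongConvexOn_iff_convex.mp hsc
  have hn : HasFDerivAt (fun z : H => μ / 2 * ‖z‖ ^ 2)
      ((μ / 2) • (2 • innerSL ℝ y)) y :=
    (hasStrictFDerivAt_norm_sq y).hasFDerivAt.const_mul (μ / 2)
  have hd2 : HasFDerivAt (fun z : H => g z - μ / 2 * ‖z‖ ^ 2)
      (L - (μ / 2) • (2 • innerSL ℝ y)) y := hd.sub hn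
  have h := convex_fd_le hconv hd2 (v := -y)
  simp only [add_neg_cancel, ContinuousLinearMap.sub_apply, ContinuousLinearMap.smul_apply,
    ContinuousLinearMap.map_neg, innerSL_apply_apply, real_inner_self_eq_norm_sq, norm_zero,
    smul_eq_mul, nsmul_eq_mul, Nat.cast_ofNat] at h
  nlinarith [h]
end aux

theorem stmt_11 {k m : ℕ} (μ a : ℝ) (hμ : 0 < μ) (ha : 0 < a)
    (f₁ : EuclideanSpace ℝ (Fin m) → ℝ) (f₂ : EuclideanSpace ℝ (Fin k) → ℝ)
    (hf₁C1 : ContDiff ℝ 1 f₁) (hf₂C1 : ContDiff ℝ 1 f₂)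
    (hf₁nonneg : ∀ y, 0 ≤ f₁ y) (hf₁zero : f₁ 0 = 0)
    (hf₁sc : StrongConvexOn Set.univ μ f₁)
    (hf₂a : ∀ y, a ≤ f₂ y)
    (f : WithLp 2 (EuclideanSpace ℝ (Fin k) × EuclideanSpace ℝ (Fin m)) → ℝ)
    (hfdef : ∀ x, f x = f₂ x.ofLp.1 * f₁ x.ofLp.2)
    (π : WithLp 2 (EuclideanSpace ℝ (Fin k) × EuclideanSpace ℝ (Fin m)) →
         WithLp 2 (EuclideanSpace ℝ (Fin k) × EuclideanSpace ℝ (Fin m)))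
    (hπdef : ∀ x, π x = WithLp.toLp 2 (x.ofLp.1, 0)) :
    (∀ x, (∀ y, f x ≤ f y) ↔ x.ofLp.2 = 0) ∧
    (∀ x z, z.ofLp.2 = 0 → ‖x - π x‖ ≤ ‖x - z‖) ∧
    (∀ x, ⟪gradient f x, x - π x⟫ ≥ f x - f (π x) + a * μ / 2 * ‖x - π x‖ ^ 2) := by
  have hf₂pos : ∀ y, 0 < f₂ y := fun y => lt_of_lt_of_le ha (hf₂a y)
  have hf₁eq : ∀ y : EuclideanSpace ℝ (Fin m), f₁ y = 0 → y = 0 := by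
    intro y hy
    by_contra hne
    have h := hf₁sc.2 (Set.mem_univ (0 : EuclideanSpace ℝ (Fin m))) (Set.mem_univ y)
      (by norm_num : (0:ℝ) ≤ 1/2) (by norm_num : (0:ℝ) ≤ 1/2) (by norm_num)
    have hnorm : 0 < ‖y‖ := norm_pos_iff.mpr hne
    have hge := hf₁nonneg ((1/2 : ℝ) • (0 : EuclideanSpace ℝ (Fin m)) + (1/2 : ℝ) • y)
    rw [hf₁zero, hy] at h
    simp only [smul_eq_mul, zero_sub, norm_neg] at h
    nlinarith [mul_pos hμ (pow_pos hnorm 2)]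
  refine ⟨?_, ?_, ?_⟩
  · intro x
    constructor
    · intro h
      have h0 : f x ≤ 0 := by
        have := h (π x)
        rwa [hfdef (π x), hπdef, WithLp.ofLp_toLp, hf₁zero, mul_zero] at this
      rw [hfdef] at h0
      have : f₁ x.ofLp.2 = 0 := by
        have h1 := hf₁nonneg x.ofLp.2
        have h2 := hf₂pos x.ofLp.1
        nlinarith
      exact hf₁eq _ this
    · intro hx2 y
      rw [hfdef, hfdef, hx2, hf₁zero, mul_zero]
      exact mul_nonneg (le_of_lt (hf₂pos _)) (hf₁nonneg _)
  · intro x z hz2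
    have h1 : (x - π x).ofLp.1 = 0 := by rw [hπdef]; exact sub_self x.ofLp.1
    have h2 : (x - π x).ofLp.2 = x.ofLp.2 := by rw [hπdef]; exact sub_zero x.ofLp.2
    have h3 : (x - z).ofLp.2 = x.ofLp.2 := by
      rw [show (x - z).ofLp.2 = x.ofLp.2 - z.ofLp.2 from rfl, hz2, sub_zero]
    have e1 : ‖x - π x‖ ^ 2 = ‖x.ofLp.2‖ ^ 2 := by
      rw [WithLp.prod_norm_sq_eq_of_L2, WithLp.fst, WithLp.snd, h1, h2, norm_zero]; ring
    have e2 : ‖x - z‖ ^ 2 = ‖(x - z).ofLp.1‖ ^ 2 + ‖x.ofLp.2‖ ^ 2 := by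
      rw [WithLp.prod_norm_sq_eq_of_L2, WithLp.fst, WithLp.snd, h3]
    nlinarith [sq_nonneg ‖(x - z).ofLp.1‖, norm_nonneg (x - π x), norm_nonneg (x - z)]
  · intro x
    let p1 : WithLp 2 (EuclideanSpace ℝ (Fin k) × EuclideanSpace ℝ (Fin m)) →L[ℝ] EuclideanSpace ℝ (Fin k) :=
      (ContinuousLinearMap.fst ℝ _ _).comp
        (WithLp.prodContinuousLinearEquiv 2 ℝ _ _).toContinuousLinearMap
    let p2 : WithLp 2 (EuclideanSpace ℝ (Fin k) × EuclideanSpace ℝ (Fin m)) →L[ℝ] EuclideanSpace ℝ (Fin m) :=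
      (ContinuousLinearMap.snd ℝ _ _).comp
        (WithLp.prodContinuousLinearEquiv 2 ℝ _ _).toContinuousLinearMap
    obtain ⟨L₁, hd₁⟩ : ∃ L, HasFDerivAt f₁ L x.ofLp.2 :=
      ⟨_, (hf₁C1.differentiable (by norm_num) x.ofLp.2).hasFDerivAt⟩
    obtain ⟨L₂, hd₂⟩ : ∃ L, HasFDerivAt f₂ L x.ofLp.1 :=
      ⟨_, (hf₂C1.differentiable (by norm_num) x.ofLp.1).hasFDerivAt⟩
    have h1 : HasFDerivAt (fun z : WithLp 2 (EuclideanSpace ℝ (Fin k) × EuclideanSpace ℝ (Fin m)) => f₂ z.ofLp.1) (L₂.comp p1) x :=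
      (show HasFDerivAt f₂ L₂ (p1 x) from hd₂).comp x p1.hasFDerivAt
    have h2 : HasFDerivAt (fun z : WithLp 2 (EuclideanSpace ℝ (Fin k) × EuclideanSpace ℝ (Fin m)) => f₁ z.ofLp.2) (L₁.comp p2) x :=
      (show HasFDerivAt f₁ L₁ (p2 x) from hd₁).comp x p2.hasFDerivAt
    have hferiv : HasFDerivAt f (f₂ x.ofLp.1 • (L₁.comp p2) + f₁ x.ofLp.2 • (L₂.comp p1)) x := by
      have hfe : f = fun z : WithLp 2 (EuclideanSpace ℝ (Fin k) × EuclideanSpace ℝ (Fin m)) => f₂ z.ofLp.1 * f₁ z.ofLp.2 := funext hfdef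
      rw [hfe]; exact h1.mul h2
    have hgrad : ⟪gradient f x, x - π x⟫ =
        (f₂ x.ofLp.1 • (L₁.comp p2) + f₁ x.ofLp.2 • (L₂.comp p1)) (x - π x) := by
      rw [hferiv.hasGradientAt.gradient, InnerProductSpace.toDual_symm_apply]
    have h1' : (x - π x).ofLp.1 = 0 := by rw [hπdef]; exact sub_self x.ofLp.1
    have h2' : (x - π x).ofLp.2 = x.ofLp.2 := by rw [hπdef]; exact sub_zero x.ofLp.2
    have hDw : (f₂ x.ofLp.1 • (L₁.comp p2) + f₁ x.ofLp.2 • (L₂.comp p1)) (x - π x)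
        = f₂ x.ofLp.1 * L₁ x.ofLp.2 := by
      simp only [ContinuousLinearMap.add_apply, ContinuousLinearMap.smul_apply,
        ContinuousLinearMap.comp_apply, smul_eq_mul]
      have hp1 : p1 (x - π x) = 0 := h1'
      have hp2 : p2 (x - π x) = x.ofLp.2 := h2'
      rw [hp1, hp2, map_zero, mul_zero, add_zero]
    have hkey : f₁ x.ofLp.2 + μ / 2 * ‖x.ofLp.2‖ ^ 2 ≤ L₁ x.ofLp.2 := by
      have := sc_key hf₁sc hd₁
      rwa [hf₁zero, sub_zero] at this
    have hnorm : ‖x - π x‖ ^ 2 = ‖x.ofLp.2‖ ^ 2 := by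
      rw [WithLp.prod_norm_sq_eq_of_L2, WithLp.fst, WithLp.snd, h1', h2', norm_zero]; ring
    have hfπ : f (π x) = 0 := by rw [hfdef, hπdef, WithLp.ofLp_toLp, hf₁zero, mul_zero]
    rw [ge_iff_le, hgrad, hDw, hfπ, hfdef, hnorm, sub_zero]
    have hfx2 := hf₂a x.ofLp.1
    have hn2 := sq_nonneg ‖x.ofLp.2‖
    have hf1n := hf₁nonneg x.ofLp.2
    nlinarith [mul_le_mul_of_nonneg_left hkey (le_of_lt (hf₂pos x.ofLp.1)),
      mul_le_mul_of_nonneg_right hfx2 (by positivity : (0:ℝ) ≤ μ / 2 * ‖x.ofLp.2‖ ^ 2)]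
end

section
/- For f(x) = (1 + ε sin(2R log x)) x²/2 (x > 0, extended evenly, f(0)=0) with ε√(1+4R²) < 1, the inequality x·f′(x) − f(x) ≥ (1/2)(1 − ε√(1+4R²)) x² holds for all x > 0; i.e., f is first-order μ-strongly convex with respect to its unique minimizer 0 with μ = 1 − ε√(1+4R²). -/
theorem stmt_14 (R ε : ℝ) (hR : 0 < R) (hε0 : 0 < ε) (hε1 : ε < 1)
    (hsmall : ε * Real.sqrt (1 + 4 * R ^ 2) < 1)
    (f : ℝ → ℝ)
    (hf : ∀ x : ℝ, f x = (1 + ε * Real.sin (2 * R * Real.log |x|)) * x ^ 2 / 2) :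
    ∀ x : ℝ, 0 < x →
      x * deriv f x - f x ≥ 1 / 2 * (1 - ε * Real.sqrt (1 + 4 * R ^ 2)) * x ^ 2 := by
  intro x hx
  set s := Real.sqrt (1 + 4 * R ^ 2) with hsdef
  have hs : 0 < s := Real.sqrt_pos.mpr (by positivity)
  have hss : s ^ 2 = 1 + 4 * R ^ 2 := Real.sq_sqrt (by positivity)
  have hxne : x ≠ 0 := ne_of_gt hx
  set θ := 2 * R * Real.log x with hθ
  have hlog : HasDerivAt Real.log x⁻¹ x := Real.hasDerivAt_log hxne
  have h1 : HasDerivAt (fun y => Real.sin (2 * R * Real.log y))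
      (Real.cos θ * (2 * R * x⁻¹)) x := by
    simpa using ((hlog.const_mul (2 * R)).sin)
  have ha : HasDerivAt (fun y => 1 + ε * Real.sin (2 * R * Real.log y))
      (ε * (Real.cos θ * (2 * R * x⁻¹))) x := (h1.const_mul ε).const_add 1
  have hb : HasDerivAt (fun y : ℝ => y ^ 2 / 2) x x := by
    have h := (hasDerivAt_pow 2 x).div_const 2
    simpa using h
  have hg := ha.mul hb
  have hDf : HasDerivAt f
      (ε * (Real.cos θ * (2 * R * x⁻¹)) * (x ^ 2 / 2)
        + (1 + ε * Real.sin θ) * x) x := by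
    refine hg.congr_of_eventuallyEq ?_
    filter_upwards [eventually_gt_nhds hx] with y hy
    rw [hf y, abs_of_pos hy]
    simp only [Pi.mul_apply]
    ring
  have hderiv : deriv f x = ε * (Real.cos θ * (2 * R * x⁻¹)) * (x ^ 2 / 2)
        + (1 + ε * Real.sin θ) * x := hDf.deriv
  rw [hderiv, hf x, abs_of_pos hx]
  have hsin := Real.sin_sq_add_cos_sq θ
  have hxx : x * x⁻¹ = 1 := mul_inv_cancel₀ hxne
  have key : x * (ε * (Real.cos θ * (2 * R * x⁻¹)) * (x ^ 2 / 2)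
        + (1 + ε * Real.sin θ) * x) - (1 + ε * Real.sin θ) * x ^ 2 / 2
      = (1 / 2 + ε / 2 * Real.sin θ + R * ε * Real.cos θ) * x ^ 2 := by
    field_simp
    ring
  rw [key]
  have hb2 : Real.sin θ + 2 * R * Real.cos θ + s ≥ 0 := by
    nlinarith [sq_nonneg (2 * R * Real.sin θ - Real.cos θ), hs,
      sq_nonneg (Real.sin θ + 2 * R * Real.cos θ + s)]
  nlinarith [sq_nonneg x, mul_pos hx hx, mul_nonneg (mul_nonneg hε0.le hb2) (sq_nonneg x)]
end

section
/- Let f: ℝᵈ → ℝ be C¹ with L-Lipschitz gradient and satisfy first-order μ-strong convexity with respect to an affine projection π(x) = Πx + x* (Π a linear orthogonal projection): ⟨∇f(x), x − π(x)⟩ ≥ f(x) − f(π(x)) + (μ/2)‖x − π(x)‖², with f(π(x)) = inf f. Suppose also ⟨∇f(x+v), v⟩ ≥ f(x+v) − f(x) − (ε/2)‖v‖² for all x, v, with ε ≤ √(μ/η). If the sequences are generated by x′ₙ = xₙ + √η vₙ, x_{n+1} = x′ₙ − η ∇f(x′ₙ), v_{n+1} = ρ(vₙ − √η ∇f(x′ₙ))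 with η ≤ 1/L and ρ = (1−√(μη))/(1+√(μη)), then f(xₙ) − inf f ≤ (1−√(μη))ⁿ [f(x₀) − inf f + (μ/2)‖x₀ − π(x₀)‖²]. -/
set_option maxHeartbeats 1000000
open RealInnerProductSpace

section aux
variable {E : Type*} [NormedAddCommGroup E] [InnerProductSpace ℝ E] [CompleteSpace E]

theorem descent_aux (f : E → ℝ) (L : ℝ) (hL : 0 ≤ L) (hf : ContDiff ℝ 1 f)
    (hlip : LipschitzWith (Real.toNNReal L) (gradient f)) (u w : E) :
    f (u + w) ≤ f u + ⟪gradient f u, w⟫ + L / 2 * ‖w‖ ^ 2 := by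
  have hdiff : ∀ y, HasGradientAt f (gradient f y) y :=
    fun y => ((hf.differentiable one_ne_zero) y).hasGradientAt
  have key : ∀ t : ℝ, HasDerivAt (fun t : ℝ => f (u + t • w))
      ⟪gradient f (u + t • w), w⟫ t := by
    intro t
    have hline : HasDerivAt (fun t : ℝ => u + t • w) w t := by
      simpa using ((hasDerivAt_id t).smul_const w).const_add u
    have := ((hdiff (u + t • w)).hasFDerivAt).comp_hasDerivAt t hline
    simpa [InnerProductSpace.toDual_apply_apply, Function.comp_def] using this
  have hcont : Continuous fun t : ℝ => ⟪gradient f (u + t • w), w⟫ :=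
    (Continuous.inner (hlip.continuous.comp (by continuity)) continuous_const)
  have heq : ∫ t in (0:ℝ)..1, ⟪gradient f (u + t • w), w⟫ = f (u + w) - f u := by
    have := intervalIntegral.integral_eq_sub_of_hasDerivAt
      (f := fun t : ℝ => f (u + t • w)) (fun t _ => key t) (hcont.intervalIntegrable 0 1)
    simpa using this
  have hcont2 : Continuous fun t : ℝ => ⟪gradient f u, w⟫ + L * ‖w‖ ^ 2 * t := by
    continuity
  have hmono : ∫ t in (0:ℝ)..1, ⟪gradient f (u + t • w), w⟫ ≤
      ∫ t in (0:ℝ)..1, (⟪gradient f u, w⟫ + L * ‖w‖ ^ 2 * t) := by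
    apply intervalIntegral.integral_mono_on (by norm_num) (hcont.intervalIntegrable 0 1)
      (hcont2.intervalIntegrable 0 1)
    intro t ht
    have h1 : ⟪gradient f (u + t • w) - gradient f u, w⟫ ≤ L * ‖w‖ ^ 2 * t := by
      calc ⟪gradient f (u + t • w) - gradient f u, w⟫
          ≤ ‖gradient f (u + t • w) - gradient f u‖ * ‖w‖ :=
            real_inner_le_norm _ _
        _ ≤ (L * ‖t • w‖) * ‖w‖ := by
            apply mul_le_mul_of_nonneg_right _ (norm_nonneg w)
            have h3 := hlip.dist_le_mul (u + t • w) u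
            simp only [dist_eq_norm] at h3
            calc ‖gradient f (u + t • w) - gradient f u‖
                ≤ (L.toNNReal : ℝ) * ‖u + t • w - u‖ := h3
              _ = L * ‖t • w‖ := by
                  rw [Real.coe_toNNReal L hL, add_sub_cancel_left]
        _ = L * ‖w‖ ^ 2 * t := by
            rw [norm_smul, Real.norm_eq_abs, abs_of_nonneg ht.1]; ring
    have h2 : ⟪gradient f (u + t • w) - gradient f u, w⟫
        = ⟪gradient f (u + t • w), w⟫ - ⟪gradient f u, w⟫ := by
      rw [inner_sub_left]
    linarith
  have hint : ∫ t in (0:ℝ)..1, (⟪gradient f u, w⟫ + L * ‖w‖ ^ 2 * t)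
      = ⟪gradient f u, w⟫ + L / 2 * ‖w‖ ^ 2 := by
    rw [intervalIntegral.integral_add intervalIntegrable_const
      (Continuous.intervalIntegrable (by continuity) 0 1),
      intervalIntegral.integral_const_mul, integral_id]
    simp; ring
  linarith [heq ▸ hmono]

omit [CompleteSpace E] in
theorem norm_comb_aux (u v w : E) (α β γ : ℝ) :
    ‖α•u + β•v - γ•w‖^2 = α^2*‖u‖^2 + β^2*‖v‖^2 + γ^2*‖w‖^2
      + 2*(α*β)*⟪u,v⟫ - 2*(α*γ)*⟪w,u⟫ - 2*(β*γ)*⟪w,v⟫ := by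
  rw [← real_inner_self_eq_norm_sq, ← real_inner_self_eq_norm_sq,
    ← real_inner_self_eq_norm_sq, ← real_inner_self_eq_norm_sq]
  simp only [inner_sub_left, inner_sub_right, inner_add_left, inner_add_right,
    real_inner_smul_left, real_inner_smul_right, real_inner_comm w u, real_inner_comm w v,
    real_inner_comm v u]
  ring

end aux

theorem stmt_16 {d : ℕ} (f : EuclideanSpace ℝ (Fin d) → ℝ) (L μ η ε : ℝ)
    (hL : 0 < L) (hμ : 0 < μ) (hμL : μ ≤ L) (hη : 0 < η) (hηL : η ≤ 1 / L)
    (hε : 0 ≤ ε) (hεbound : ε ≤ Real.sqrt (μ / η))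
    (hf : ContDiff ℝ 1 f)
    (hlip : LipschitzWith (Real.toNNReal L) (gradient f))
    (P : EuclideanSpace ℝ (Fin d) →L[ℝ] EuclideanSpace ℝ (Fin d))
    (hPproj : ∀ x, P (P x) = P x)
    (hPsym : ∀ x y, ⟪P x, y⟫ = ⟪x, P y⟫)
    (xstar : EuclideanSpace ℝ (Fin d)) (hxstar : P xstar = 0)
    (π : EuclideanSpace ℝ (Fin d) → EuclideanSpace ℝ (Fin d))
    (hπdef : ∀ x, π x = P x + xstar)
    (hπmin : ∀ x y, f (π x) ≤ f y)
    (hsc : ∀ x, ⟪gradient f x, x - π x⟫ ≥ f x - f (π x) + μ / 2 * ‖x - π x‖ ^ 2)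
    (hnc : ∀ x v, ⟪gradient f (x + v), v⟫ ≥ f (x + v) - f x - ε / 2 * ‖v‖ ^ 2)
    (ρ : ℝ) (hρ : ρ = (1 - Real.sqrt (μ * η)) / (1 + Real.sqrt (μ * η)))
    (x x' v : ℕ → EuclideanSpace ℝ (Fin d))
    (hv0 : v 0 = 0)
    (hx' : ∀ n, x' n = x n + Real.sqrt η • v n)
    (hxrec : ∀ n, x (n + 1) = x' n - η • gradient f (x' n))
    (hvrec : ∀ n, v (n + 1) = ρ • (v n - Real.sqrt η • gradient f (x' n))) :
    ∀ n, f (x n) - f (π (x 0)) ≤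
      (1 - Real.sqrt (μ * η)) ^ n *
        (f (x 0) - f (π (x 0)) + μ / 2 * ‖x 0 - π (x 0)‖ ^ 2) := by
  set fs := f (π (x 0)) with hfs_def
  set q := Real.sqrt (μ * η) with hq_def
  set s := Real.sqrt η with hs_def
  have hq2 : q ^ 2 = μ * η := Real.sq_sqrt (by positivity)
  have hs2 : s ^ 2 = η := Real.sq_sqrt hη.le
  have hq0 : 0 < q := Real.sqrt_pos.mpr (by positivity)
  have hs0 : 0 < s := Real.sqrt_pos.mpr hη
  have hμη1 : μ * η ≤ 1 := by
    calc μ * η ≤ L * η := mul_le_mul_of_nonneg_right hμL hη.le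
      _ ≤ L * (1 / L) := mul_le_mul_of_nonneg_left hηL hL.le
      _ = 1 := by field_simp
  have hq1 : q ≤ 1 := Real.sqrt_le_one.mpr hμη1
  have h1q : (0:ℝ) ≤ 1 - q := by linarith
  have hμ' : μ = q ^ 2 / s ^ 2 := by rw [hq2, hs2]; field_simp
  have hη' : η = s ^ 2 := hs2.symm
  set t := (1 + q)^2 / (2 * (1 - q)) with ht_def
  have ht0 : 0 ≤ t := div_nonneg (sq_nonneg _) (by linarith)
  have htρ : t * ρ ^ 2 = (1 - q) / 2 := by
    rcases eq_or_lt_of_le hq1 with h | h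
    · rw [hρ, ← h]; norm_num
    · rw [hρ, ht_def]
      have h1 : (1:ℝ) - q ≠ 0 := by linarith
      have h2 : (1:ℝ) + q ≠ 0 := by linarith
      field_simp
  have hvt : (1 - q) * ((1 + q)/2) ≤ (1 - q) * t := by
    rcases eq_or_lt_of_le hq1 with h | h
    · rw [← h]; norm_num
    · have h1 : (1:ℝ) - q ≠ 0 := by linarith
      have : (1 - q) * t = (1 + q)^2 / 2 := by rw [ht_def]; field_simp
      rw [this]; nlinarith
  have hεη : ε * η ≤ q := by
    have h1 : ε ^ 2 ≤ μ / η := by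
      have h := pow_le_pow_left₀ hε hεbound 2
      rwa [Real.sq_sqrt (by positivity : (0:ℝ) ≤ μ / η)] at h
    have h2 : (ε * η) ^ 2 ≤ q ^ 2 := by
      rw [hq2]
      have : ε ^ 2 * η ≤ μ := by
        have := mul_le_mul_of_nonneg_right h1 hη.le
        rwa [div_mul_cancel₀] at this
        exact hη.ne'
      nlinarith
    nlinarith [hq0, mul_nonneg hε hη.le]
  -- basic consequences
  have hfs : ∀ y, f (π y) = fs := fun y => le_antisymm (hπmin y (π (x 0))) (hπmin (x 0) (π y))
  have hPz : ∀ u, P (u - π u) = 0 := by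
    intro u
    rw [hπdef]
    simp [map_sub, map_add, hPproj, hxstar]
  have hsplit : ∀ u : EuclideanSpace ℝ (Fin d), ‖u - P u‖^2 = ‖u‖^2 - ‖P u‖^2 := by
    intro u
    have h1 : ⟪u, P u⟫ = ‖P u‖^2 := by
      rw [← real_inner_self_eq_norm_sq]
      rw [real_inner_comm (P u) (P u)]
      calc ⟪u, P u⟫ = ⟪u, P (P u)⟫ := by rw [hPproj]
        _ = ⟪P u, P u⟫ := by rw [← hPsym]
    rw [norm_sub_sq_real, h1]; ring
  -- sequences
  set g : ℕ → EuclideanSpace ℝ (Fin d) := fun n => gradient f (x' n) with hg_def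
  set a : ℕ → EuclideanSpace ℝ (Fin d) := fun n => x' n - π (x' n) with ha_def
  set z : ℕ → EuclideanSpace ℝ (Fin d) := fun n => x n + ((1 + q)/q * s) • v n with hz_def
  set b : ℕ → EuclideanSpace ℝ (Fin d) := fun n => z n - π (z n) with hb_def
  set Lya : ℕ → ℝ := fun n => f (x n) - fs + μ/2 * ‖b n‖^2 + t * ‖P (v n)‖^2 with hLya_def
  have hb0 : b 0 = x 0 - π (x 0) := by
    simp only [hb_def, hz_def, hv0, smul_zero, add_zero]
  have hstep : ∀ n, Lya (n + 1) ≤ (1 - q) * Lya n := by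
    intro n
    -- vector identities
    have h1q' : (1:ℝ) + q ≠ 0 := by linarith
    have hbn : b n = a n + (s/q) • (v n - P (v n)) := by
      simp only [hb_def, hz_def, ha_def, hπdef, hx', map_add, map_smul]
      match_scalars <;> field_simp <;> ring
    have hb' : b (n+1) = (1-q) • b n + q • a n - (η/q) • (g n - P (g n)) := by
      simp only [hb_def, hz_def, ha_def, hg_def, hπdef, hxrec, hvrec, hx', hρ, hη',
        map_add, map_smul, map_sub]
      match_scalars <;> field_simp <;> ring
    have hPv' : P (v (n+1)) = ρ • (P (v n) - s • P (g n)) := by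
      rw [hvrec]; simp [map_smul, map_sub]; rfl
    -- inner product identities
    have hPb : P (b n) = 0 := hPz (z n)
    have hPGb : ⟪P (g n), b n⟫ = 0 := by
      rw [hPsym, hPb, inner_zero_right]
    have hPa : P (a n) = 0 := hPz (x' n)
    have hPGa : ⟪P (g n), a n⟫ = 0 := by
      rw [hPsym, hPa, inner_zero_right]
    have hGb : ⟪g n - P (g n), b n⟫ = ⟪g n, a n⟫ + (s/q)*(⟪g n, v n⟫ - ⟪g n, P (v n)⟫) := by
      rw [inner_sub_left, hPGb, hbn]
      simp only [inner_add_right, inner_sub_right, real_inner_smul_right]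
      ring
    have hGa : ⟪g n - P (g n), a n⟫ = ⟪g n, a n⟫ := by
      rw [inner_sub_left, hPGa]; ring
    have hw2 : ‖g n - P (g n)‖^2 = ‖g n‖^2 - ‖P (g n)‖^2 := hsplit (g n)
    have hJ : 2*⟪b n, a n⟫ = ‖b n‖^2 + ‖a n‖^2 - (η/q^2)*(‖v n‖^2 - ‖P (v n)‖^2) := by
      have h1 := norm_sub_sq_real (b n) (a n)
      have h2 : ‖b n - a n‖^2 = (η/q^2) * (‖v n‖^2 - ‖P (v n)‖^2) := by
        rw [hbn, add_sub_cancel_left, norm_smul, mul_pow, hsplit]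
        rw [Real.norm_eq_abs, sq_abs]
        rw [hη']; field_simp; try ring
      rw [h2] at h1; linarith only [h1]
    -- key equalities
    have e1 : μ/2 * ‖b (n+1)‖^2 =
        (1-q)*(μ/2)*‖b n‖^2 + q*(μ/2)*‖a n‖^2 + η/2*(‖g n‖^2 - ‖P (g n)‖^2)
        - (q*(1-q)/2)*(‖v n‖^2 - ‖P (v n)‖^2)
        - q*⟪g n, a n⟫ - (1-q)*s*⟪g n, v n⟫ + (1-q)*s*⟪g n, P (v n)⟫ := by
      rw [hb', norm_comb_aux, hGb, hGa, hw2]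
      have hJ' : ⟪b n, a n⟫ = (‖b n‖^2 + ‖a n‖^2 - (η/q^2)*(‖v n‖^2 - ‖P (v n)‖^2))/2 := by
        linarith only [hJ]
      rw [hJ']
      rw [hμ', hη']
      field_simp
      ring
    have e2 : t * ‖P (v (n+1))‖^2 =
        ((1-q)/2)*‖P (v n)‖^2 - (1-q)*s*⟪g n, P (v n)⟫ + ((1-q)*η/2)*‖P (g n)‖^2 := by
      have hip : ⟪P (v n), P (g n)⟫ = ⟪g n, P (v n)⟫ := by
        calc ⟪P (v n), P (g n)⟫ = ⟪P (g n), P (v n)⟫ := real_inner_comm _ _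
          _ = ⟪g n, P (P (v n))⟫ := hPsym _ _
          _ = ⟪g n, P (v n)⟫ := by rw [hPproj]
      have expand : ‖P (v n) - s • P (g n)‖^2
          = ‖P (v n)‖^2 - 2*(s*⟪g n, P (v n)⟫) + s^2*‖P (g n)‖^2 := by
        rw [norm_sub_sq_real, real_inner_smul_right, hip, norm_smul, Real.norm_eq_abs,
          mul_pow, sq_abs]
      rw [hPv', norm_smul, Real.norm_eq_abs, mul_pow, sq_abs, expand]
      linear_combination (‖P (v n)‖^2 - 2*(s*⟪g n, P (v n)⟫) + s^2*‖P (g n)‖^2) * htρ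
        + ((1-q)/2*‖P (g n)‖^2) * hs2
    -- key inequalities
    have F5 : f (x (n+1)) ≤ f (x' n) - η/2 * ‖g n‖^2 := by
      have key := descent_aux f L hL.le hf hlip (x' n) ((-η) • g n)
      have hx1 : x (n+1) = x' n + (-η) • g n := by
        rw [hxrec, sub_eq_add_neg, neg_smul]
      rw [← hx1] at key
      have hi : ⟪gradient f (x' n), (-η) • g n⟫ = -(η * ‖g n‖^2) := by
        rw [real_inner_smul_right, show gradient f (x' n) = g n from rfl,
          real_inner_self_eq_norm_sq]
        ring
      have hn : ‖(-η) • g n‖^2 = η^2 * ‖g n‖^2 := by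
        rw [norm_smul, Real.norm_eq_abs, mul_pow, sq_abs]; ring
      rw [hi, hn] at key
      have hηL' : η * L ≤ 1 := (le_div_iff₀ hL).mp hηL
      have hprod : 0 ≤ (η * ‖g n‖^2) * (1 - η*L) :=
        mul_nonneg (mul_nonneg hη.le (sq_nonneg _)) (by linarith)
      linarith only [key, hprod]
    have F6 : ⟪g n, a n⟫ ≥ (f (x' n) - fs) + μ/2 * ‖a n‖^2 := by
      have := hsc (x' n)
      rw [hfs (x' n)] at this
      exact this
    have F7 : s*⟪g n, v n⟫ ≥ f (x' n) - f (x n) - ε/2*η*‖v n‖^2 := by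
      have h1 := hnc (x n) (s • v n)
      rw [← hx' n] at h1
      rw [norm_smul, Real.norm_eq_abs, abs_of_nonneg hs0.le] at h1
      have h2 : ⟪gradient f (x' n), s • v n⟫ = s * ⟪g n, v n⟫ := by
        rw [real_inner_smul_right]
      rw [h2] at h1
      have h3 : ε/2*(s*‖v n‖)^2 = ε/2*η*‖v n‖^2 := by rw [← hs2]; ring
      linarith only [h1, h3]
    -- premultiplied
    have c2 : q*⟪g n, a n⟫ ≥ q*((f (x' n) - fs) + μ/2 * ‖a n‖^2) :=
      mul_le_mul_of_nonneg_left F6 hq0.le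
    have c3 : (1-q)*(s*⟪g n, v n⟫) ≥ (1-q)*(f (x' n) - f (x n) - ε/2*η*‖v n‖^2) :=
      mul_le_mul_of_nonneg_left F7 h1q
    have c4 : (1-q)*(ε/2*η*‖v n‖^2) ≤ (1-q)*(q/2*‖v n‖^2) := by
      apply mul_le_mul_of_nonneg_left _ h1q
      have hm := mul_le_mul_of_nonneg_right hεη (sq_nonneg ‖v n‖)
      linarith only [hm]
    have c5 : (0:ℝ) ≤ q*η/2*‖P (g n)‖^2 := by positivity
    have c6 : (1-q)*((1+q)/2)*‖P (v n)‖^2 ≤ (1-q)*t*‖P (v n)‖^2 := by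
      apply mul_le_mul_of_nonneg_right _ (sq_nonneg _)
      exact hvt
    show f (x (n+1)) - fs + μ/2 * ‖b (n+1)‖^2 + t * ‖P (v (n+1))‖^2
      ≤ (1 - q) * (f (x n) - fs + μ/2 * ‖b n‖^2 + t * ‖P (v n)‖^2)
    rw [e1, e2]
    linarith only [F5, c2, c3, c4, c5, c6]
  -- conclusion
  have hmain : ∀ n, Lya n ≤ (1 - q)^n * Lya 0 := by
    intro n
    induction n with
    | zero => simp
    | succ k ih =>
      calc Lya (k+1) ≤ (1-q) * Lya k := hstep k
        _ ≤ (1-q) * ((1-q)^k * Lya 0) := mul_le_mul_of_nonneg_left ih h1q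
        _ = (1-q)^(k+1) * Lya 0 := by ring
  intro n
  have hL0 : Lya 0 = f (x 0) - fs + μ/2 * ‖x 0 - π (x 0)‖^2 := by
    simp only [hLya_def, hb0, hv0, map_zero, norm_zero]
    ring
  have h1 : f (x n) - fs ≤ Lya n := by
    have k1 : (0:ℝ) ≤ μ/2 * ‖b n‖^2 := by positivity
    have k2 : (0:ℝ) ≤ t * ‖P (v n)‖^2 := mul_nonneg ht0 (sq_nonneg _)
    simp only [hLya_def]
    linarith
  calc f (x n) - fs ≤ Lya n := h1
    _ ≤ (1-q)^n * Lya 0 := hmain n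
    _ = (1-q)^n * (f (x 0) - fs + μ/2 * ‖x 0 - π (x 0)‖^2) := by rw [hL0]
end

section
/- Under the assumptions and iteration of the Nesterov scheme with η ≤ 1/L and ρ = (1−√(μη))/(1+√(μη)), the Lyapunov quantity Lₙ = f(xₙ) − inf f + (1/2)‖Π^⊥ vₙ + √μ (x′ₙ − π(x′ₙ))‖² + [(1+√(μη))²/(2(1−√(μη)))]‖Π vₙ‖² satisfies L_{n+1} ≤ (1 − √(μη)) Lₙ. -/
set_option maxHeartbeats 2000000
open RealInnerProductSpace

lemma grad_inner {d : ℕ} (f : EuclideanSpace ℝ (Fin d) → ℝ) (z w : EuclideanSpace ℝ (Fin d)) :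
    fderiv ℝ f z w = ⟪gradient f z, w⟫ := by
  rw [gradient]; simp [InnerProductSpace.toDual_apply_apply]

lemma descent {d : ℕ} (f : EuclideanSpace ℝ (Fin d) → ℝ) (L : ℝ) (hL : 0 ≤ L)
    (hf : ContDiff ℝ 1 f) (hlip : LipschitzWith (Real.toNNReal L) (gradient f))
    (x y : EuclideanSpace ℝ (Fin d)) :
    f y ≤ f x + ⟪gradient f x, y - x⟫ + L / 2 * ‖y - x‖ ^ 2 := by
  set u := y - x with hu
  have hdiff : Differentiable ℝ f := hf.differentiable one_ne_zero
  set φ' : ℝ → ℝ := fun t => ⟪gradient f (x + t • u), u⟫ with hφ'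
  have hline : ∀ t : ℝ, HasDerivAt (fun t : ℝ => x + t • u) u t := by
    intro t
    simpa using ((hasDerivAt_id t).smul_const u).const_add x
  have hderiv : ∀ t : ℝ, HasDerivAt (fun t => f (x + t • u)) (φ' t) t := by
    intro t
    have h1 : HasFDerivAt f (fderiv ℝ f (x + t • u)) (x + t • u) :=
      (hdiff (x + t • u)).hasFDerivAt
    have := h1.comp_hasDerivAt t (hline t)
    rw [grad_inner] at this; exact this
  have hgradcont : Continuous (gradient f) := hlip.continuous
  have hcont : Continuous φ' := by
    exact (hgradcont.comp (by continuity)).inner continuous_const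
  have hFTC : ∫ t in (0:ℝ)..1, φ' t = f y - f x := by
    rw [intervalIntegral.integral_eq_sub_of_hasDerivAt (fun t _ => hderiv t)
      (hcont.intervalIntegrable 0 1)]
    simp [hu]
  have hbound : ∀ t ∈ Set.Icc (0:ℝ) 1, φ' t ≤ φ' 0 + L * ‖u‖ ^ 2 * t := by
    intro t ht
    have h1 : φ' t - φ' 0 = ⟪gradient f (x + t • u) - gradient f (x + (0:ℝ) • u), u⟫ := by
      rw [inner_sub_left]
    have h2 : ⟪gradient f (x + t • u) - gradient f (x + (0:ℝ) • u), u⟫ ≤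
        ‖gradient f (x + t • u) - gradient f (x + (0:ℝ) • u)‖ * ‖u‖ :=
      real_inner_le_norm _ _
    have h3 : ‖gradient f (x + t • u) - gradient f (x + (0:ℝ) • u)‖ ≤ L * (t * ‖u‖) := by
      have he : (x + t • u) - (x + (0:ℝ) • u) = t • u := by module
      have hd : dist (x + t • u) (x + (0:ℝ) • u) = ‖t • u‖ := by
        rw [dist_eq_norm, he]
      calc ‖gradient f (x + t • u) - gradient f (x + (0:ℝ) • u)‖
          ≤ L.toNNReal * dist (x + t • u) (x + (0:ℝ) • u) := by
            rw [← dist_eq_norm]; exact hlip.dist_le_mul _ _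
        _ = L.toNNReal * ‖t • u‖ := by rw [hd]
        _ ≤ L * (t * ‖u‖) := by
            rw [norm_smul, Real.norm_eq_abs, abs_of_nonneg ht.1]
            rw [Real.coe_toNNReal _ hL]
    nlinarith [norm_nonneg u, ht.1, mul_le_mul_of_nonneg_right h3 (norm_nonneg u),
      h2, h1]
  have hineq : ∫ t in (0:ℝ)..1, φ' t ≤ ∫ t in (0:ℝ)..1, (φ' 0 + L * ‖u‖ ^ 2 * t) := by
    apply intervalIntegral.integral_mono_on zero_le_one (hcont.intervalIntegrable 0 1)
    · exact ((continuous_const.add (continuous_const.mul continuous_id)).intervalIntegrable 0 1)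
    · exact hbound
  have hval : ∫ t in (0:ℝ)..1, (φ' 0 + L * ‖u‖ ^ 2 * t) = φ' 0 + L * ‖u‖ ^ 2 / 2 := by
    have : ∫ t in (0:ℝ)..1, (φ' 0 + L * ‖u‖ ^ 2 * t) =
        (∫ _t in (0:ℝ)..1, φ' 0) + ∫ t in (0:ℝ)..1, L * ‖u‖ ^ 2 * t := by
      apply intervalIntegral.integral_add intervalIntegrable_const
      exact (continuous_const.mul continuous_id).intervalIntegrable 0 1
    rw [this, intervalIntegral.integral_const, intervalIntegral.integral_const_mul,
      integral_id]
    simp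
    ring
  have hφ0 : φ' 0 = ⟪gradient f x, y - x⟫ := by simp [hφ', hu]
  rw [hFTC] at hineq
  rw [hval, hφ0] at hineq
  nlinarith [hineq]

theorem stmt_17 {d : ℕ} (f : EuclideanSpace ℝ (Fin d) → ℝ) (L μ η ε : ℝ)
    (hL : 0 < L) (hμ : 0 < μ) (hμL : μ ≤ L) (hη : 0 < η) (hηL : η ≤ 1 / L)
    (hε : 0 ≤ ε) (hεbound : ε ≤ Real.sqrt (μ / η))
    (hf : ContDiff ℝ 1 f)
    (hlip : LipschitzWith (Real.toNNReal L) (gradient f))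
    (P : EuclideanSpace ℝ (Fin d) →L[ℝ] EuclideanSpace ℝ (Fin d))
    (hPproj : ∀ x, P (P x) = P x)
    (hPsym : ∀ x y, ⟪P x, y⟫ = ⟪x, P y⟫)
    (xstar : EuclideanSpace ℝ (Fin d)) (hxstar : P xstar = 0)
    (π : EuclideanSpace ℝ (Fin d) → EuclideanSpace ℝ (Fin d))
    (hπdef : ∀ x, π x = P x + xstar)
    (hπmin : ∀ x y, f (π x) ≤ f y)
    (hsc : ∀ x, ⟪gradient f x, x - π x⟫ ≥ f x - f (π x) + μ / 2 * ‖x - π x‖ ^ 2)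
    (hnc : ∀ x v, ⟪gradient f (x + v), v⟫ ≥ f (x + v) - f x - ε / 2 * ‖v‖ ^ 2)
    (ρ : ℝ) (hρ : ρ = (1 - Real.sqrt (μ * η)) / (1 + Real.sqrt (μ * η)))
    (x x' v : ℕ → EuclideanSpace ℝ (Fin d))
    (hx' : ∀ n, x' n = x n + Real.sqrt η • v n)
    (hxrec : ∀ n, x (n + 1) = x' n - η • gradient f (x' n))
    (hvrec : ∀ n, v (n + 1) = ρ • (v n - Real.sqrt η • gradient f (x' n)))
    (Lyap : ℕ → ℝ)
    (hLyap : ∀ n, Lyap n =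
      f (x n) - f (π (x n)) +
      1 / 2 * ‖(v n - P (v n)) + Real.sqrt μ • (x' n - π (x' n))‖ ^ 2 +
      (1 + Real.sqrt (μ * η)) ^ 2 / (2 * (1 - Real.sqrt (μ * η))) * ‖P (v n)‖ ^ 2) :
    ∀ n, Lyap (n + 1) ≤ (1 - Real.sqrt (μ * η)) * Lyap n := by
  intro n
  set a := Real.sqrt η with ha
  set b := Real.sqrt μ with hb
  have ha2 : a ^ 2 = η := Real.sq_sqrt hη.le
  have hb2 : b ^ 2 = μ := Real.sq_sqrt hμ.le
  have ha0 : 0 < a := Real.sqrt_pos.2 hη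
  have hb0 : 0 < b := Real.sqrt_pos.2 hμ
  have hsab : Real.sqrt (μ * η) = a * b := by
    rw [Real.sqrt_mul hμ.le, ← ha, ← hb, mul_comm]
  have hμη1 : μ * η ≤ 1 := by
    have h1 : μ * η ≤ L * (1 / L) := mul_le_mul hμL hηL hη.le hL.le
    have h2 : L * (1 / L) = 1 := by field_simp
    linarith
  have hab1 : a * b ≤ 1 := by rw [← hsab]; exact Real.sqrt_le_one.mpr hμη1
  have hab0 : (0:ℝ) ≤ a * b := (mul_pos ha0 hb0).le
  have h1ab : (0:ℝ) < 1 + a * b := by linarith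
  rw [hsab] at hρ
  rw [hLyap, hLyap, hsab]
  set c := (1 + a * b) ^ 2 / (2 * (1 - a * b)) with hc
  -- scalar facts about c and ρ
  have hcrho : c * ρ ^ 2 = (1 - a * b) / 2 := by
    rcases eq_or_lt_of_le hab1 with heq | hlt
    · rw [hc, hρ, ← heq]
      norm_num
    · have h1 : (1:ℝ) - a * b ≠ 0 := by linarith
      rw [hc, hρ]
      field_simp
  have hK : a * b * (1 - a * b) / 2 + (1 - a * b) / 2 - (1 - a * b) * c ≤ 0 := by
    rcases eq_or_lt_of_le hab1 with heq | hlt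
    · rw [← heq]; norm_num
    · have h1 : (1:ℝ) - a * b ≠ 0 := by linarith
      have hceq : (1 - a * b) * c = (1 + a * b) ^ 2 / 2 := by
        rw [hc]; field_simp
      rw [hceq]
      nlinarith [hab0, mul_nonneg hab0 hab0]
  -- vector abbreviations
  set g := gradient f (x' n) with hg
  set p := P (v n) with hp
  set w := v n - P (v n) with hw
  set u := x' n - π (x' n) with hu2
  set gp := P g with hgp
  -- projection facts
  have hPw : P w = 0 := by rw [hw]; simp [map_sub, hPproj]
  have hPu : P u = 0 := by
    rw [hu2, hπdef]; simp [map_sub, map_add, hPproj, hxstar]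
  have horth : ∀ z y : EuclideanSpace ℝ (Fin d), P z = 0 → ⟪z, P y⟫ = 0 := by
    intro z y hz
    rw [← hPsym, hz, inner_zero_left]
  have hwp : ⟪w, p⟫ = 0 := by rw [hp]; exact horth w (v n) hPw
  have hwh : ⟪w, gp⟫ = 0 := by rw [hgp]; exact horth w g hPw
  have huh : ⟪u, gp⟫ = 0 := by rw [hgp]; exact horth u g hPu
  have hup : ⟪u, p⟫ = 0 := by rw [hp]; exact horth u (v n) hPu
  have hgh : ⟪g, gp⟫ = ⟪gp, gp⟫ := by
    rw [hgp, hPsym g (P g), hPproj]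
  have hph : ⟪p, gp⟫ = ⟪g, p⟫ := by
    rw [hp, hgp, hPsym (v n) (P g), hPproj, ← hPsym g (v n)]
    exact real_inner_comm _ _
  -- main vector identities
  have hfstar : f (π (x (n + 1))) = f (π (x n)) :=
    le_antisymm (hπmin _ _) (hπmin _ _)
  have hfstar' : f (π (x' n)) = f (π (x n)) :=
    le_antisymm (hπmin _ _) (hπmin _ _)
  have hA : (v (n+1) - P (v (n+1))) + b • (x' (n+1) - π (x' (n+1)))
      = (1 - a * b) • w + b • u - a • (g - gp) := by
    rw [hx' (n+1), hxrec n, hvrec n, hw, hu2, hgp, hρ, hπdef, hπdef]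
    simp only [map_add, map_sub, map_smul, ← hg, show η = a ^ 2 from ha2.symm]
    have h1 : (1:ℝ) + a * b ≠ 0 := ne_of_gt h1ab
    match_scalars <;> field_simp <;> ring
  have hB : P (v (n+1)) = ρ • (p - a • gp) := by
    rw [hvrec n, hp, hgp]
    simp only [map_smul, map_sub, ← hg]
  rw [hfstar, hA, hB]
  -- norm expansions
  have E1 : ‖(1 - a * b) • w + b • u - a • (g - gp)‖ ^ 2
      = (1 - a*b)^2 * ⟪w,w⟫ + b^2 * ⟪u,u⟫ + a^2 * (⟪g,g⟫ - ⟪gp,gp⟫)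
        + 2*(1 - a*b)*b*⟪w,u⟫ - 2*(1 - a*b)*a*⟪g,w⟫ - 2*a*b*⟪g,u⟫ := by
    rw [← real_inner_self_eq_norm_sq]
    simp only [inner_add_left, inner_add_right, inner_sub_left, inner_sub_right,
      real_inner_smul_left, real_inner_smul_right,
      real_inner_comm w u, real_inner_comm g w, real_inner_comm g u,
      real_inner_comm w gp, real_inner_comm u gp, real_inner_comm g gp,
      hwh, huh, hgh]
    ring
  have E2 : ‖p - a • gp‖ ^ 2 = ⟪p,p⟫ - 2*a*⟪g,p⟫ + a^2 * ⟪gp,gp⟫ := by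
    rw [← real_inner_self_eq_norm_sq]
    simp only [inner_sub_left, inner_sub_right, real_inner_smul_left,
      real_inner_smul_right, real_inner_comm p gp, hph]
    ring
  have E0 : ‖w + b • u‖ ^ 2 = ⟪w,w⟫ + 2*b*⟪w,u⟫ + b^2 * ⟪u,u⟫ := by
    rw [← real_inner_self_eq_norm_sq]
    simp only [inner_add_left, inner_add_right, real_inner_smul_left,
      real_inner_smul_right, real_inner_comm w u]
    ring
  have hv : v n = w + p := by rw [hw, hp]; abel
  have EV : ‖v n‖ ^ 2 = ⟪w,w⟫ + ⟪p,p⟫ := by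
    rw [hv, ← real_inner_self_eq_norm_sq]
    simp only [inner_add_left, inner_add_right, real_inner_comm w p, hwp]
    ring
  have EG : ⟪g, v n⟫ = ⟪g,w⟫ + ⟪g,p⟫ := by rw [hv, inner_add_right]
  have hsm : c * ‖ρ • (p - a • gp)‖ ^ 2 = (1 - a * b) / 2 * ‖p - a • gp‖ ^ 2 := by
    rw [norm_smul, Real.norm_eq_abs, mul_pow, sq_abs, ← mul_assoc, hcrho]
  have hPnorm : ‖p‖ ^ 2 = ⟪p,p⟫ := (real_inner_self_eq_norm_sq p).symm
  -- scalar inequalities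
  have hgg : (0:ℝ) ≤ ⟪g,g⟫ := real_inner_self_nonneg
  have hp2 : (0:ℝ) ≤ ⟪p,p⟫ := real_inner_self_nonneg
  have hh2 : (0:ℝ) ≤ ⟪gp,gp⟫ := real_inner_self_nonneg
  have hu2n : (0:ℝ) ≤ ⟪u,u⟫ := real_inner_self_nonneg
  have hLη : η * L ≤ 1 := (le_div_iff₀ hL).mp hηL
  have hdesc : f (x (n+1)) ≤ f (x' n) - a^2/2 * ⟪g,g⟫ := by
    have hd := descent f L hL.le hf hlip (x' n) (x (n+1))
    have hxx : x (n+1) - x' n = -(η • g) := by rw [hxrec n, hg]; module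
    rw [hxx] at hd
    have h1 : ⟪g, -(η • g)⟫ = -(η * ⟪g,g⟫) := by
      rw [inner_neg_right, real_inner_smul_right]
    have h2 : ‖-(η • g)‖ ^ 2 = η^2 * ⟪g,g⟫ := by
      rw [norm_neg, norm_smul, Real.norm_eq_abs, mul_pow, sq_abs,
        real_inner_self_eq_norm_sq]
    rw [← hg, h1, h2] at hd
    rw [ha2]
    have hint : 0 ≤ η * ⟪g,g⟫ * (1 - η * L) :=
      mul_nonneg (mul_nonneg hη.le hgg) (by linarith)
    linarith [hd, hint]
  have hlow : f (x' n) ≤ f (x n) + a * (⟪g,w⟫ + ⟪g,p⟫) + a*b/2 * (⟪w,w⟫ + ⟪p,p⟫) := by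
    have hn := hnc (x n) (a • v n)
    rw [show x n + a • v n = x' n from (hx' n).symm] at hn
    rw [← hg, real_inner_smul_right] at hn
    have h2 : ‖a • v n‖ ^ 2 = a^2 * ‖v n‖^2 := by
      rw [norm_smul, Real.norm_eq_abs, mul_pow, sq_abs]
    rw [h2, EV, EG] at hn
    have hεb : ε ≤ b / a := by
      rw [show b / a = Real.sqrt (μ / η) by
        rw [Real.sqrt_div hμ.le, ← ha, ← hb]]
      exact hεbound
    have hεab : ε * a^2 ≤ a * b := by
      have h3 : ε * a^2 ≤ (b/a) * a^2 := mul_le_mul_of_nonneg_right hεb (sq_nonneg a)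
      have h4 : (b/a) * a^2 = a * b := by field_simp
      linarith
    have hVnn : (0:ℝ) ≤ ⟪w,w⟫ + ⟪p,p⟫ := by
      rw [← EV]; positivity
    linarith [hn, mul_le_mul_of_nonneg_right hεab hVnn]
  have hsc2 : f (x' n) - f (π (x n)) ≤ ⟪g,u⟫ - b^2/2 * ⟪u,u⟫ := by
    have hs := hsc (x' n)
    rw [← hg, ← hu2, hfstar'] at hs
    rw [show ‖u‖^2 = ⟪u,u⟫ from (real_inner_self_eq_norm_sq u).symm] at hs
    rw [hb2]
    linarith
  -- assemble
  rw [hsm, E1, E2, E0, hPnorm]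
  have hlow2 := mul_le_mul_of_nonneg_left hlow (by linarith : (0:ℝ) ≤ 1 - a*b)
  have hs2' := mul_le_mul_of_nonneg_left hsc2 hab0
  have hKP : (a*b*(1 - a*b)/2 + (1 - a*b)/2 - (1 - a*b)*c) * ⟪p,p⟫ ≤ 0 :=
    mul_nonpos_iff.mpr (Or.inr ⟨hK, hp2⟩)
  have hH : (0:ℝ) ≤ a*b*(a^2/2)*⟪gp,gp⟫ := by positivity
  set q1 := ⟪w,w⟫ with hq1
  set q2 := ⟪w,u⟫ with hq2
  set q3 := ⟪u,u⟫ with hq3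
  set q4 := ⟪p,p⟫ with hq4
  set q5 := ⟪g,w⟫ with hq5
  set q6 := ⟪g,u⟫ with hq6
  set q7 := ⟪g,p⟫ with hq7
  set q8 := ⟪g,g⟫ with hq8
  set q9 := ⟪gp,gp⟫ with hq9
  set F0 := f (x n) with hF0
  set F1 := f (x (n+1)) with hF1
  set F2 := f (x' n) with hF2
  set D := f (π (x n)) with hD
  linarith [hdesc, hlow2, hs2', hKP, hH]
end

section
/- Let x solve the heavy ball ODE ẍ + 2√μ ẋ = −∇f(x), ẋ(0) = 0, on the sublevel set U_α where f is first-order μ-strongly convex with respect to the C¹ closest-point projection π onto its manifold of minimizers, and assume (i) ⟨ẋ, d/dt π(x)⟩ ≥ 0 and (ii) ⟨x − π(x), d/dt π(x)⟩ = 0 along the trajectory. Then the Lyapunov function L(t) = f(x(t)) − inf f + (1/2)‖ẋ(t) + √μ (x(t) − π(x(t)))‖² satisfies L′(t) ≤ −√μ L(t), and hence f(x(t)) − inf f ≤ e^{−√μ t} (f(x₀) − inf f + (μ/2) dist(x₀, M)²). -/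
open RealInnerProductSpace
set_option maxHeartbeats 1000000

theorem stmt_19 {d : ℕ} (f : EuclideanSpace ℝ (Fin d) → ℝ) (μ α : ℝ) (hμ : 0 < μ)
    (hf : ContDiff ℝ 1 f)
    (U : Set (EuclideanSpace ℝ (Fin d))) (hU : U = {y | f y < α})
    (π : EuclideanSpace ℝ (Fin d) → EuclideanSpace ℝ (Fin d))
    (hπC1 : ContDiffOn ℝ 1 π U)
    (hπmin : ∀ y z, f (π y) ≤ f z)
    (hsc : ∀ y ∈ U, ⟪gradient f y, y - π y⟫ ≥ f y - f (π y) + μ / 2 * ‖y - π y‖ ^ 2)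
    (x : ℝ → EuclideanSpace ℝ (Fin d)) (hx : ContDiff ℝ 2 x)
    (hxU : ∀ t : ℝ, 0 ≤ t → x t ∈ U)
    (hode : ∀ t : ℝ, 0 ≤ t →
      deriv (deriv x) t = -((2 * Real.sqrt μ) • deriv x t) - gradient f (x t))
    (hv0 : deriv x 0 = 0)
    (hzdiff : ∀ t : ℝ, 0 ≤ t → DifferentiableAt ℝ (fun s => π (x s)) t)
    (htang : ∀ t : ℝ, 0 ≤ t → 0 ≤ ⟪deriv x t, deriv (fun s => π (x s)) t⟫)
    (horth : ∀ t : ℝ, 0 ≤ t → ⟪x t - π (x t), deriv (fun s => π (x s)) t⟫ = 0)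
    (Lf : ℝ → ℝ)
    (hLf : ∀ t, Lf t = f (x t) - f (π (x t)) +
      1 / 2 * ‖deriv x t + Real.sqrt μ • (x t - π (x t))‖ ^ 2) :
    (∀ t : ℝ, 0 ≤ t → deriv Lf t ≤ -Real.sqrt μ * Lf t) ∧
    (∀ t : ℝ, 0 ≤ t → f (x t) - f (π (x t)) ≤
      Real.exp (-Real.sqrt μ * t) *
        (f (x 0) - f (π (x 0)) + μ / 2 * ‖x 0 - π (x 0)‖ ^ 2)) := by
  set sq := Real.sqrt μ with hsqdef
  have hsqnn : 0 ≤ sq := Real.sqrt_nonneg μ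
  have hsq2 : sq ^ 2 = μ := Real.sq_sqrt hμ.le
  have hconst : ∀ y, f (π y) = f (π (x 0)) := fun y => le_antisymm (hπmin y _) (hπmin (x 0) _)
  set m := f (π (x 0)) with hmdef
  have hxd : ∀ s : ℝ, HasDerivAt x (deriv x s) s :=
    fun s => ((hx.differentiable (by norm_num)) s).hasDerivAt
  have hvd : ∀ s : ℝ, HasDerivAt (deriv x) (deriv (deriv x) s) s := by
    have h : ContDiff ℝ 1 (deriv x) := by
      have := (contDiff_succ_iff_deriv (n := 1)).mp (by norm_num at hx ⊢; exact hx)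
      exact this.2.2
    exact fun s => ((h.differentiable one_ne_zero) s).hasDerivAt
  have hfd := hf.differentiable one_ne_zero
  have hLeq : Lf = fun s => f (x s) - m + 1 / 2 * ‖deriv x s + sq • (x s - π (x s))‖ ^ 2 :=
    funext fun s => by rw [hLf s, hconst (x s)]
  have main : ∀ t : ℝ, 0 ≤ t → ∃ D : ℝ, HasDerivAt Lf D t ∧ D ≤ -sq * Lf t := by
    intro t ht
    have hz'd : HasDerivAt (fun s => π (x s)) (deriv (fun s => π (x s)) t) t :=
      (hzdiff t ht).hasDerivAt
    set v := deriv x t with hv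
    set z' := deriv (fun s => π (x s)) t with hz'
    set g := gradient f (x t) with hg
    set u := x t - π (x t) with hu
    have hw' : HasDerivAt (fun s => deriv x s + sq • (x s - π (x s)))
        (deriv (deriv x) t + sq • (v - z')) t :=
      (hvd t).add (((hxd t).sub hz'd).const_smul sq)
    set w := v + sq • u with hwdef
    set w' := deriv (deriv x) t + sq • (v - z') with hw'def
    have hN : HasDerivAt (fun s => ‖deriv x s + sq • (x s - π (x s))‖ ^ 2)
        (⟪w, w'⟫ + ⟪w', w⟫) t := by
      have heq : (fun s => ‖deriv x s + sq • (x s - π (x s))‖ ^ 2)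
          = (fun s => (⟪deriv x s + sq • (x s - π (x s)),
              deriv x s + sq • (x s - π (x s))⟫ : ℝ)) :=
        funext fun s => (real_inner_self_eq_norm_sq _).symm
      rw [heq]
      exact hw'.inner ℝ hw'
    have hfx : HasDerivAt (fun s => f (x s)) ⟪g, v⟫ t := by
      have h1 := (hfd (x t)).hasGradientAt.hasFDerivAt
      have := h1.comp_hasDerivAt t (hxd t)
      simp [InnerProductSpace.toDual_apply_apply, hg, hv] at this ⊢; exact this
    have hLd : HasDerivAt Lf (⟪g, v⟫ - 0 + 1 / 2 * (⟪w, w'⟫ + ⟪w', w⟫)) t := by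
      rw [hLeq]
      exact ((hfx.sub (hasDerivAt_const t m)).add (hN.const_mul (1 / 2)))
    refine ⟨_, hLd, ?_⟩
    have hsc' := hsc (x t) (hxU t ht)
    rw [hconst (x t), ← hu, ← hg, ← real_inner_self_eq_norm_sq] at hsc'
    have hc : (0:ℝ) ≤ ⟪v, z'⟫ := htang t ht
    have he : ⟪u, z'⟫ = (0:ℝ) := horth t ht
    have hodet : deriv (deriv x) t = -((2 * sq) • v) - g := hode t ht
    rw [hLf t, hconst (x t), ← hu, ← hv, ← hwdef, ← real_inner_self_eq_norm_sq]
    rw [hw'def, hodet, hwdef]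
    simp only [inner_add_left, inner_add_right, inner_sub_left, inner_sub_right,
      real_inner_smul_left, real_inner_smul_right, inner_neg_left, inner_neg_right]
    rw [← hsq2] at hsc'
    rw [real_inner_comm u v, real_inner_comm v g, real_inner_comm u g,
      real_inner_comm z' v, real_inner_comm z' u]
    rw [real_inner_comm u g] at hsc'
    rw [real_inner_comm z' v] at hc
    rw [real_inner_comm z' u] at he
    rw [he]
    linarith [mul_nonneg hsqnn hc, mul_nonneg hsqnn (sub_nonneg.2 hsc'),
      mul_nonneg hsqnn (real_inner_self_nonneg (x := v)), he]
  have hdiff : ∀ t : ℝ, 0 ≤ t → DifferentiableAt ℝ Lf t :=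
    fun t ht => (main t ht).choose_spec.1.differentiableAt
  have hder1 : ∀ t : ℝ, 0 ≤ t → deriv Lf t ≤ -sq * Lf t := by
    intro t ht
    obtain ⟨D, hD, hle⟩ := main t ht
    rw [hD.deriv]; exact hle
  refine ⟨hder1, ?_⟩
  set G : ℝ → ℝ := fun s => Real.exp (sq * s) * Lf s with hGdef
  have hGder : ∀ t : ℝ, 0 ≤ t →
      HasDerivAt G (Real.exp (sq * t) * sq * Lf t + Real.exp (sq * t) * deriv Lf t) t := by
    intro t ht
    have h0 : HasDerivAt (fun s : ℝ => sq * s) sq t := by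
      simpa using (hasDerivAt_id t).const_mul sq
    have h1 : HasDerivAt (fun s => Real.exp (sq * s)) (Real.exp (sq * t) * sq) t :=
      (Real.hasDerivAt_exp (sq * t)).comp t h0
    exact h1.mul (hdiff t ht).hasDerivAt
  have hGanti : AntitoneOn G (Set.Ici (0:ℝ)) := by
    apply antitoneOn_of_deriv_nonpos (convex_Ici 0)
    · intro t ht
      exact ((Real.continuous_exp.comp (continuous_const.mul continuous_id)).continuousAt.mul
        (hdiff t ht).continuousAt).continuousWithinAt
    · intro t ht
      rw [interior_Ici] at ht
      exact ((hGder t ht.le).differentiableAt).differentiableWithinAt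
    · intro t ht
      rw [interior_Ici] at ht
      rw [(hGder t ht.le).deriv]
      have h1 := hder1 t ht.le
      have hexp : (0:ℝ) < Real.exp (sq * t) := Real.exp_pos _
      nlinarith [mul_le_mul_of_nonneg_left h1 hexp.le]
  intro t ht
  have hG : G t ≤ G 0 := hGanti Set.self_mem_Ici ht ht
  have hL0 : Lf 0 = f (x 0) - m + μ / 2 * ‖x 0 - π (x 0)‖ ^ 2 := by
    rw [hLf 0, hv0, ← hmdef, zero_add, norm_smul, Real.norm_eq_abs, abs_of_nonneg hsqnn,
      mul_pow, hsq2]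
    ring
  have hG0 : G 0 = Lf 0 := by simp [hGdef]
  have hLt : Lf t ≤ Real.exp (-sq * t) * Lf 0 := by
    rw [hG0] at hG
    have hexp : (0:ℝ) < Real.exp (sq * t) := Real.exp_pos _
    have : Real.exp (-sq * t) = (Real.exp (sq * t))⁻¹ := by
      rw [← Real.exp_neg]; ring_nf
    rw [this]
    rw [inv_mul_eq_div, le_div_iff₀ hexp]
    calc Lf t * Real.exp (sq * t) = G t := by rw [hGdef]; ring
      _ ≤ Lf 0 := hG
  have hlow : f (x t) - f (π (x t)) ≤ Lf t := by
    rw [hLf t]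
    have h0 : (0:ℝ) ≤ ‖deriv x t + sq • (x t - π (x t))‖ ^ 2 := sq_nonneg _
    linarith
  calc f (x t) - f (π (x t)) ≤ Lf t := hlow
    _ ≤ Real.exp (-sq * t) * Lf 0 := hLt
    _ = Real.exp (-sq * t) * (f (x 0) - f (π (x 0)) + μ / 2 * ‖x 0 - π (x 0)‖ ^ 2) := by
        rw [hL0, hmdef]
end
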